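/- Let A = [[0, Id_d],[−Id_d, 2·Id_d]], and for t > 0 let Σ_t = ∫₀^t e^{−(t−r)A} ΣΣᵀ e^{−(t−r)Aᵀ} dr with Σ = [[0],[2·Id_d]]. Define the kinetic OU semigroup by P_t f(u) = ∫ f(e^{−tA}u + Σ_t^{1/2} z) γ^{2d}(z) dz. There exists a universal constant C > 0 such that for every continuously differentiable f : ℝ^{2d} → ℝ with |f(u)| + ‖∇f(u)‖ ≤ C₀ e^{a‖u‖} for some constants C₀, a ≥ 0, and every t > 0 and u ∈ ℝ^{2d}, one has ‖∇(P_t f)(u)‖ ≤ C e^{−t/2} P_t(‖∇f‖)(u). -/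

import Mathlib

open MeasureTheory Real Set Matrix
open scoped ENNReal RealInnerProductSpace

noncomputable section

/-- The phase space `ℝ^{2d}`, with points `u = (x, v)`: coordinates `Sum.inl i` are the
`x`-coordinates and `Sum.inr i` the `v`-coordinates. -/
abbrev Phase (d : ℕ) := EuclideanSpace ℝ (Fin d ⊕ Fin d)

/-- The drift matrix `A = [[0, Id_d], [−Id_d, 2·Id_d]]` of the kinetic OU process. -/
def kinA (d : ℕ) : Matrix (Fin d ⊕ Fin d) (Fin d ⊕ Fin d) ℝ :=
  Matrix.fromBlocks 0 1 (-1) (2 • (1 : Matrix (Fin d) (Fin d) ℝ))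

/-- `Σ Σᵀ = [[0, 0], [0, 4·Id_d]]`, where `Σ = [[0], [2·Id_d]]`. -/
def kinSigmaSq (d : ℕ) : Matrix (Fin d ⊕ Fin d) (Fin d ⊕ Fin d) ℝ :=
  Matrix.fromBlocks 0 0 0 (4 • (1 : Matrix (Fin d) (Fin d) ℝ))

/-- `Σ_t = ∫₀^t e^{−(t−r)A} Σ Σᵀ e^{−(t−r)Aᵀ} dr`, defined entrywise. -/
def kinCov (d : ℕ) (t : ℝ) : Matrix (Fin d ⊕ Fin d) (Fin d ⊕ Fin d) ℝ :=
  fun i j => ∫ r in Set.Ioc (0 : ℝ) t,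
    (NormedSpace.exp ((-(t - r)) • kinA d) * kinSigmaSq d *
      NormedSpace.exp ((-(t - r)) • (kinA d)ᵀ)) i j

/-- The kinetic OU transition kernel `q_t(u₁, u)`: the Gaussian density on `ℝ^{2d}` with mean
`e^{−tA} u₁` and covariance `Σ_t`. -/
def kinKernel (d : ℕ) (t : ℝ) (u₁ u : Phase d) : ℝ :=
  (2 * π) ^ (-(2 * d : ℝ) / 2) * (kinCov d t).det ^ (-(1 : ℝ) / 2) *
    Real.exp (-(dotProduct
        ((kinCov d t)⁻¹.mulVec
          (fun i => (WithLp.equiv 2 _) u i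
            - (NormedSpace.exp ((-t) • kinA d)).mulVec ((WithLp.equiv 2 _) u₁) i))
        (fun i => (WithLp.equiv 2 _) u i
          - (NormedSpace.exp ((-t) • kinA d)).mulVec ((WithLp.equiv 2 _) u₁) i)) / 2)

/-- The kinetic OU marginal densities `p_t(u) = ∫ p₀(u') q_t(u', u) du'`. -/
def kinMarginal (d : ℕ) (p₀ : Phase d → ℝ) (t : ℝ) (u : Phase d) : ℝ :=
  ∫ u', p₀ u' * kinKernel d t u' u

/-- The standard Gaussian density on the phase space `ℝ^{2d}`. -/
def gauss2 (d : ℕ) (u : Phase d) : ℝ :=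
  (2 * π) ^ (-(2 * d : ℝ) / 2) * Real.exp (-‖u‖ ^ 2 / 2)

/-- The positive square root of a positive semidefinite matrix (junk value `0` otherwise). -/
def matSqrt (d : ℕ) (M : Matrix (Fin d ⊕ Fin d) (Fin d ⊕ Fin d) ℝ) :
    Matrix (Fin d ⊕ Fin d) (Fin d ⊕ Fin d) ℝ :=
  open scoped Classical in
  if h : M.PosSemidef then
    (h.1.eigenvectorUnitary : Matrix (Fin d ⊕ Fin d) (Fin d ⊕ Fin d) ℝ) *
      diagonal (fun i => √(h.1.eigenvalues i)) *
      (star h.1.eigenvectorUnitary : Matrix (Fin d ⊕ Fin d) (Fin d ⊕ Fin d) ℝ)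
  else 0

/-- The kinetic OU semigroup `P_t f(u) = ∫ f(e^{−tA} u + Σ_t^{1/2} z) γ^{2d}(z) dz`. -/
def kinSemigroup (d : ℕ) (t : ℝ) (f : Phase d → ℝ) (u : Phase d) : ℝ :=
  ∫ z : Phase d,
    f ((WithLp.equiv 2 _).symm
        ((NormedSpace.exp ((-t) • kinA d)).mulVec ((WithLp.equiv 2 _) u)
          + (matSqrt d (kinCov d t)).mulVec ((WithLp.equiv 2 _) z)))
      * gauss2 d z

set_option maxHeartbeats 1000000
set_option synthInstance.maxHeartbeats 1000000

/-! ### Auxiliary lemmas -/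

def kinN (d : ℕ) : Matrix (Fin d ⊕ Fin d) (Fin d ⊕ Fin d) ℝ :=
  Matrix.fromBlocks (-1) 1 (-1) 1

lemma kinA_eq (d : ℕ) : kinA d = 1 + kinN d := by
  rw [kinA, kinN, ← Matrix.fromBlocks_one, Matrix.fromBlocks_add]
  norm_num [two_smul]

lemma kinN_mul_self (d : ℕ) : kinN d * kinN d = 0 := by
  rw [kinN, Matrix.fromBlocks_multiply]; simp

lemma exp_of_sq_zero {ι : Type*} [Fintype ι] [DecidableEq ι]
    (M : Matrix ι ι ℝ) (h : M * M = 0) : NormedSpace.exp M = 1 + M := by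
  rw [NormedSpace.exp_eq_tsum ℝ]
  show ∑' (n : ℕ), ((n.factorial : ℝ))⁻¹ • M ^ n = 1 + M
  rw [tsum_eq_sum (s := Finset.range 2) ?_]
  · simp [Finset.sum_range_succ]
  · intro n hn
    have h2 : 2 ≤ n := by simp at hn; omega
    have : M ^ n = 0 := by
      have e : M ^ n = M ^ 2 * M ^ (n - 2) := by
        rw [← pow_add]; congr 1; omega
      rw [e, pow_two, h, zero_mul]
    simp [this]

lemma exp_smul_one {ι : Type*} [Fintype ι] [DecidableEq ι] (c : ℝ) :
    NormedSpace.exp (c • (1 : Matrix ι ι ℝ)) = Real.exp c • (1 : Matrix ι ι ℝ) := by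
  have h : ∀ x : ℝ, x • (1 : Matrix ι ι ℝ) = Matrix.diagonal (fun _ => x) := by
    intro x; ext i j; simp [Matrix.diagonal_apply, Matrix.one_apply]
  rw [h, h, Matrix.exp_diagonal]
  congr 1; ext i; simp [Real.exp_eq_exp_ℝ]

lemma exp_kinA (d : ℕ) (t : ℝ) :
    NormedSpace.exp ((-t) • kinA d) = Real.exp (-t) • (1 - t • kinN d) := by
  have hsplit : (-t) • kinA d = (-t) • (1 : Matrix _ _ ℝ) + (-t) • kinN d := by
    rw [kinA_eq, smul_add]
  have hcomm : Commute ((-t) • (1 : Matrix (Fin d ⊕ Fin d) (Fin d ⊕ Fin d) ℝ)) ((-t) • kinN d) :=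
    ((Commute.one_left (kinN d)).smul_left (-t)).smul_right (-t)
  rw [hsplit, Matrix.exp_add_of_commute _ _ hcomm, exp_smul_one,
    exp_of_sq_zero _ (by rw [smul_mul_smul_comm, kinN_mul_self, smul_zero])]
  rw [smul_mul_assoc, one_mul, sub_eq_add_neg, neg_smul]

lemma kinN_mulVec (d : ℕ) (w : (Fin d ⊕ Fin d) → ℝ) (j : Fin d ⊕ Fin d) :
    (kinN d).mulVec w j = w (Sum.inr (Sum.elim id id j)) - w (Sum.inl (Sum.elim id id j)) := by
  cases j <;>
  simp [kinN, Matrix.mulVec, dotProduct, Fintype.sum_sum_type, Matrix.fromBlocks,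
    Matrix.one_apply, ite_mul, sub_eq_neg_add]

lemma norm_kinN_apply (d : ℕ) (w : Phase d) :
    ‖Matrix.toEuclideanCLM (𝕜 := ℝ) (kinN d) w‖ ≤ 2 * ‖w‖ := by
  have happ : ∀ j, (Matrix.toEuclideanCLM (𝕜 := ℝ) (kinN d) w) j
      = w (Sum.inr (Sum.elim id id j)) - w (Sum.inl (Sum.elim id id j)) := fun j =>
    kinN_mulVec d (WithLp.equiv 2 _ w) j
  have key : ‖Matrix.toEuclideanCLM (𝕜 := ℝ) (kinN d) w‖ ^ 2 ≤ (2 * ‖w‖) ^ 2 := by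
    rw [EuclideanSpace.norm_eq, EuclideanSpace.norm_eq w, mul_pow, Real.sq_sqrt (by positivity),
      Real.sq_sqrt (by positivity)]
    simp only [happ, Real.norm_eq_abs, sq_abs, Fintype.sum_sum_type, Sum.elim_inl, Sum.elim_inr,
      id_eq]
    rw [mul_add, ← Finset.sum_add_distrib]
    have hpt : ∀ i : Fin d, (w (Sum.inr i) - w (Sum.inl i)) ^ 2 +
        (w (Sum.inr i) - w (Sum.inl i)) ^ 2 ≤
        2 ^ 2 * w (Sum.inl i) ^ 2 + 2 ^ 2 * w (Sum.inr i) ^ 2 := by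
      intro i; nlinarith [sq_nonneg (w (Sum.inr i) + w (Sum.inl i))]
    calc (∑ i : Fin d, ((w (Sum.inr i) - w (Sum.inl i)) ^ 2
            + (w (Sum.inr i) - w (Sum.inl i)) ^ 2))
        ≤ ∑ i : Fin d, (2 ^ 2 * w (Sum.inl i) ^ 2 + 2 ^ 2 * w (Sum.inr i) ^ 2) :=
          Finset.sum_le_sum fun i _ => hpt i
      _ = (∑ i : Fin d, 2 ^ 2 * w (Sum.inl i) ^ 2)
            + ∑ i : Fin d, 2 ^ 2 * w (Sum.inr i) ^ 2 := Finset.sum_add_distrib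
      _ = 2 ^ 2 * (∑ i : Fin d, w (Sum.inl i) ^ 2) + 2 ^ 2 * ∑ i : Fin d, w (Sum.inr i) ^ 2 := by
          rw [Finset.mul_sum, Finset.mul_sum]
  calc ‖Matrix.toEuclideanCLM (𝕜 := ℝ) (kinN d) w‖
      = Real.sqrt (‖Matrix.toEuclideanCLM (𝕜 := ℝ) (kinN d) w‖ ^ 2) := by
        rw [Real.sqrt_sq (norm_nonneg _)]
    _ ≤ Real.sqrt ((2 * ‖w‖) ^ 2) := Real.sqrt_le_sqrt key
    _ = 2 * ‖w‖ := Real.sqrt_sq (by positivity)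

lemma norm_expA_apply (d : ℕ) {t : ℝ} (ht : 0 ≤ t) (w : Phase d) :
    ‖Matrix.toEuclideanCLM (𝕜 := ℝ) (NormedSpace.exp ((-t) • kinA d)) w‖
      ≤ (4 * Real.exp (-t/2)) * ‖w‖ := by
  rw [exp_kinA]
  have hmap : Matrix.toEuclideanCLM (𝕜 := ℝ) (Real.exp (-t) • (1 - t • kinN d))
      = Real.exp (-t) • (1 - t • Matrix.toEuclideanCLM (𝕜 := ℝ) (kinN d)) := by
    simp [_root_.map_smul, map_sub, _root_.map_one]
  rw [hmap]
  have happ : (Real.exp (-t) • (1 - t • Matrix.toEuclideanCLM (𝕜 := ℝ) (kinN d))) w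
      = Real.exp (-t) • (w - t • Matrix.toEuclideanCLM (𝕜 := ℝ) (kinN d) w) := by
    simp
  rw [happ, norm_smul, Real.norm_eq_abs, abs_of_pos (Real.exp_pos _)]
  have hb : ‖w - t • Matrix.toEuclideanCLM (𝕜 := ℝ) (kinN d) w‖ ≤ (1 + 2*t) * ‖w‖ := by
    calc ‖w - t • Matrix.toEuclideanCLM (𝕜 := ℝ) (kinN d) w‖
        ≤ ‖w‖ + ‖t • Matrix.toEuclideanCLM (𝕜 := ℝ) (kinN d) w‖ := norm_sub_le _ _
      _ = ‖w‖ + t * ‖Matrix.toEuclideanCLM (𝕜 := ℝ) (kinN d) w‖ := by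
          rw [norm_smul, Real.norm_eq_abs, abs_of_nonneg ht]
      _ ≤ ‖w‖ + t * (2 * ‖w‖) := by
          have := norm_kinN_apply d w
          nlinarith [norm_nonneg w]
      _ = (1 + 2*t) * ‖w‖ := by ring
  calc Real.exp (-t) * ‖w - t • Matrix.toEuclideanCLM (𝕜 := ℝ) (kinN d) w‖
      ≤ Real.exp (-t) * ((1 + 2*t) * ‖w‖) :=
        mul_le_mul_of_nonneg_left hb (Real.exp_pos _).le
    _ = (Real.exp (-t) * (1 + 2*t)) * ‖w‖ := by ring
    _ ≤ (4 * Real.exp (-t/2)) * ‖w‖ := by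
        apply mul_le_mul_of_nonneg_right _ (norm_nonneg w)
        have h1 : 1 + 2*t ≤ 4 * Real.exp (t/2) := by
          nlinarith [Real.add_one_le_exp (t/2)]
        calc Real.exp (-t) * (1 + 2*t) ≤ Real.exp (-t) * (4 * Real.exp (t/2)) :=
              mul_le_mul_of_nonneg_left h1 (Real.exp_pos _).le
          _ = 4 * Real.exp (-t/2) := by
              rw [mul_comm (Real.exp (-t)), mul_assoc, ← Real.exp_add]; ring_nf

lemma gauss2_pos (d : ℕ) (u : Phase d) : 0 < gauss2 d u := by
  unfold gauss2; positivity

lemma gauss2_continuous (d : ℕ) : Continuous (gauss2 d) := by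
  unfold gauss2; fun_prop

lemma integrable_quarter_sq (d : ℕ) :
    Integrable (fun z : Phase d => Real.exp (-(1/4) * ‖z‖ ^ 2)) := by
  have h := GaussianFourier.integrable_cexp_neg_mul_sq_norm_add
    (V := Phase d) (b := (1/4 : ℂ)) (by norm_num) 0 0
  have := h.norm
  refine this.congr ?_
  filter_upwards with z
  rw [Complex.norm_exp]
  congr 1
  simp [← Complex.ofReal_pow]

lemma integrable_exp_gauss (d : ℕ) (b : ℝ) :
    Integrable (fun z : Phase d => Real.exp (b * ‖z‖) * gauss2 d z) := by
  set c : ℝ := (2 * π) ^ (-(2 * d : ℝ) / 2) with hc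
  have hcpos : 0 < c := by rw [hc]; positivity
  refine Integrable.mono ((integrable_quarter_sq d).const_mul (c * Real.exp (b ^ 2)))
    ((Continuous.mul (by fun_prop) (gauss2_continuous d)).aestronglyMeasurable) ?_
  filter_upwards with z
  rw [Real.norm_eq_abs, Real.norm_eq_abs]
  have h1 : 0 < Real.exp (b * ‖z‖) * gauss2 d z := mul_pos (Real.exp_pos _) (gauss2_pos d z)
  rw [abs_of_pos h1, abs_of_pos (by positivity)]
  unfold gauss2
  rw [← hc]
  have hexp : Real.exp (b * ‖z‖) * (c * Real.exp (-‖z‖ ^ 2 / 2))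
      = c * Real.exp (b * ‖z‖ + -‖z‖ ^ 2 / 2) := by rw [Real.exp_add]; ring
  rw [hexp]
  have h2 : b * ‖z‖ + -‖z‖ ^ 2 / 2 ≤ b ^ 2 + -(1/4) * ‖z‖ ^ 2 := by
    nlinarith [sq_nonneg (b - ‖z‖ / 2), sq_nonneg (b + ‖z‖/2), norm_nonneg z, sq_nonneg b]
  calc c * Real.exp (b * ‖z‖ + -‖z‖ ^ 2 / 2) ≤ c * Real.exp (b ^ 2 + -(1/4) * ‖z‖ ^ 2) := by
        apply mul_le_mul_of_nonneg_left (Real.exp_le_exp.mpr h2) hcpos.le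
    _ = c * Real.exp (b ^ 2) * Real.exp (-(1/4) * ‖z‖ ^ 2) := by rw [Real.exp_add]; ring

lemma integrable_dom {d : ℕ} {g : Phase d → ℝ} (hg : AEStronglyMeasurable g volume)
    {C b : ℝ} (h : ∀ z, |g z| ≤ C * Real.exp (b * ‖z‖)) :
    Integrable (fun z => g z * gauss2 d z) := by
  refine Integrable.mono ((integrable_exp_gauss d b).const_mul C)
    (hg.mul (gauss2_continuous d).aestronglyMeasurable) ?_
  filter_upwards with z
  have hC : 0 ≤ C * Real.exp (b * ‖z‖) := le_trans (abs_nonneg _) (h z)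
  have hC0 : 0 ≤ C := by nlinarith [Real.exp_pos (b * ‖z‖)]
  rw [Real.norm_eq_abs, Real.norm_eq_abs, abs_mul, abs_of_pos (gauss2_pos d z),
    abs_of_nonneg (mul_nonneg hC0 (mul_nonneg (Real.exp_pos _).le (gauss2_pos d z).le))]
  calc |g z| * gauss2 d z ≤ (C * Real.exp (b * ‖z‖)) * gauss2 d z :=
        mul_le_mul_of_nonneg_right (h z) (gauss2_pos d z).le
    _ = C * (Real.exp (b * ‖z‖) * gauss2 d z) := by ring

lemma norm_gradient_eq {d : ℕ} (g : Phase d → ℝ) (x : Phase d) :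
    ‖gradient g x‖ = ‖fderiv ℝ g x‖ := by
  unfold gradient
  exact LinearIsometryEquiv.norm_map (InnerProductSpace.toDual ℝ (Phase d)).symm _

theorem stmt15 :
    ∃ C > (0 : ℝ), ∀ (d : ℕ) (f : Phase d → ℝ) (C₀ a : ℝ), 0 ≤ C₀ → 0 ≤ a →
      ContDiff ℝ 1 f →
      (∀ u, |f u| + ‖gradient f u‖ ≤ C₀ * Real.exp (a * ‖u‖)) →
      ∀ t > (0 : ℝ), ∀ u : Phase d,
        ‖gradient (kinSemigroup d t f) u‖ ≤
          C * Real.exp (-t / 2) * kinSemigroup d t (fun w => ‖gradient f w‖) u := by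
  refine ⟨4, by norm_num, ?_⟩
  intro d f C₀ a hC₀ ha hf hgrow t ht u
  have ht' : (0:ℝ) ≤ t := ht.le
  set κ : ℝ := 4 * Real.exp (-t/2) with hκ
  have hκpos : 0 < κ := by rw [hκ]; positivity
  set LE : Phase d →L[ℝ] Phase d :=
    Matrix.toEuclideanCLM (𝕜 := ℝ) (NormedSpace.exp ((-t) • kinA d)) with hLEdef
  set LS : Phase d →L[ℝ] Phase d :=
    Matrix.toEuclideanCLM (𝕜 := ℝ) (matSqrt d (kinCov d t)) with hLSdef
  have hLE_pt : ∀ w : Phase d, ‖LE w‖ ≤ κ * ‖w‖ := fun w => norm_expA_apply d ht' w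
  have hLEnorm : ‖LE‖ ≤ κ := ContinuousLinearMap.opNorm_le_bound _ hκpos.le hLE_pt
  have harg : ∀ (u' z : Phase d),
      (WithLp.equiv 2 _).symm
        ((NormedSpace.exp ((-t) • kinA d)).mulVec ((WithLp.equiv 2 _) u')
          + (matSqrt d (kinCov d t)).mulVec ((WithLp.equiv 2 _) z)) = LE u' + LS z := by
    intro u' z
    rw [Equiv.symm_apply_eq, hLEdef, hLSdef]
    rfl
  have hsemi : ∀ g : Phase d → ℝ, ∀ u' : Phase d,
      kinSemigroup d t g u' = ∫ z, g (LE u' + LS z) * gauss2 d z := by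
    intro g u'
    unfold kinSemigroup
    simp only [harg]
  -- growth bounds
  have hfabs : ∀ y, |f y| ≤ C₀ * Real.exp (a * ‖y‖) := fun y =>
    le_trans (le_add_of_nonneg_right (norm_nonneg _)) (hgrow y)
  have hgradabs : ∀ y, ‖gradient f y‖ ≤ C₀ * Real.exp (a * ‖y‖) := fun y =>
    le_trans (le_add_of_nonneg_left (abs_nonneg _)) (hgrow y)
  have hfd : ∀ y, ‖fderiv ℝ f y‖ ≤ C₀ * Real.exp (a * ‖y‖) := fun y => by
    rw [← norm_gradient_eq]; exact hgradabs y
  have hfc : Continuous f := hf.continuous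
  have hfderiv_cont : Continuous (fderiv ℝ f) := hf.continuous_fderiv one_ne_zero
  have hgrad_cont : Continuous (gradient f) :=
    (InnerProductSpace.toDual ℝ (Phase d)).symm.continuous.comp hfderiv_cont
  have hdiff : Differentiable ℝ f := hf.differentiable one_ne_zero
  -- composite growth bound: for any g with exponential growth
  have hcomp : ∀ (g : Phase d → ℝ), (∀ y, |g y| ≤ C₀ * Real.exp (a * ‖y‖)) →
      ∀ z : Phase d, |g (LE u + LS z)| ≤
        (C₀ * Real.exp (a * ‖LE u‖)) * Real.exp ((a * ‖LS‖) * ‖z‖) := by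
    intro g hg z
    have hy : ‖LE u + LS z‖ ≤ ‖LE u‖ + ‖LS‖ * ‖z‖ :=
      le_trans (norm_add_le _ _) (by gcongr; exact LS.le_opNorm z)
    calc |g (LE u + LS z)| ≤ C₀ * Real.exp (a * ‖LE u + LS z‖) := hg _
      _ ≤ C₀ * Real.exp (a * (‖LE u‖ + ‖LS‖ * ‖z‖)) := by
          gcongr
      _ = (C₀ * Real.exp (a * ‖LE u‖)) * Real.exp ((a * ‖LS‖) * ‖z‖) := by
          rw [mul_add a ‖LE u‖ (‖LS‖ * ‖z‖), ← mul_assoc a ‖LS‖ ‖z‖, Real.exp_add]; ring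
  -- the derivative of the semigroup
  set K : ℝ := κ * (C₀ * Real.exp (a * (κ * (‖u‖ + 1)))) with hK
  have key : HasFDerivAt (fun u' : Phase d => ∫ z, f (LE u' + LS z) * gauss2 d z)
      (∫ z, gauss2 d z • ((fderiv ℝ f (LE u + LS z)).comp LE)) u := by
    apply hasFDerivAt_integral_of_dominated_of_fderiv_le
      (F' := fun (x : Phase d) (z : Phase d) => gauss2 d z • ((fderiv ℝ f (LE x + LS z)).comp LE))
      (bound := fun z => K * (Real.exp ((a * ‖LS‖) * ‖z‖) * gauss2 d z))
      (s := Metric.ball u 1) (Metric.ball_mem_nhds u one_pos)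
    · filter_upwards with x
      exact ((hfc.comp (continuous_const.add LS.continuous)).mul
        (gauss2_continuous d)).aestronglyMeasurable
    · exact integrable_dom ((hfc.comp (continuous_const.add LS.continuous)).aestronglyMeasurable)
        (hcomp f hfabs)
    · exact ((gauss2_continuous d).smul
        ((hfderiv_cont.comp (continuous_const.add LS.continuous)).clm_comp
          continuous_const)).aestronglyMeasurable
    · filter_upwards with z
      intro x hx
      have hxn : ‖x‖ ≤ ‖u‖ + 1 := by
        have hdist : dist x u < 1 := Metric.mem_ball.mp hx
        calc ‖x‖ = ‖u + (x - u)‖ := by congr 1; abel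
          _ ≤ ‖u‖ + ‖x - u‖ := norm_add_le _ _
          _ ≤ ‖u‖ + 1 := by rw [← dist_eq_norm]; linarith
      have hy : ‖LE x + LS z‖ ≤ κ * (‖u‖ + 1) + ‖LS‖ * ‖z‖ := by
        calc ‖LE x + LS z‖ ≤ ‖LE x‖ + ‖LS z‖ := norm_add_le _ _
          _ ≤ κ * (‖u‖ + 1) + ‖LS‖ * ‖z‖ := by
              refine add_le_add (le_trans (hLE_pt x) ?_) (LS.le_opNorm z)
              exact mul_le_mul_of_nonneg_left hxn hκpos.le
      have hfy : ‖fderiv ℝ f (LE x + LS z)‖ ≤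
          (C₀ * Real.exp (a * (κ * (‖u‖ + 1)))) * Real.exp ((a * ‖LS‖) * ‖z‖) := by
        calc ‖fderiv ℝ f (LE x + LS z)‖ ≤ C₀ * Real.exp (a * ‖LE x + LS z‖) := hfd _
          _ ≤ C₀ * Real.exp (a * (κ * (‖u‖ + 1) + ‖LS‖ * ‖z‖)) := by gcongr
          _ = (C₀ * Real.exp (a * (κ * (‖u‖ + 1)))) * Real.exp ((a * ‖LS‖) * ‖z‖) := by
              rw [mul_add a (κ * (‖u‖ + 1)) (‖LS‖ * ‖z‖), ← mul_assoc a ‖LS‖ ‖z‖,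
                Real.exp_add]; ring
      rw [norm_smul (gauss2 d z) ((fderiv ℝ f (LE x + LS z)).comp LE), Real.norm_eq_abs,
        abs_of_pos (gauss2_pos d z)]
      calc gauss2 d z * ‖(fderiv ℝ f (LE x + LS z)).comp LE‖
          ≤ gauss2 d z * (‖fderiv ℝ f (LE x + LS z)‖ * ‖LE‖) :=
            mul_le_mul_of_nonneg_left (ContinuousLinearMap.opNorm_comp_le _ _)
              (gauss2_pos d z).le
        _ ≤ gauss2 d z * ((C₀ * Real.exp (a * (κ * (‖u‖ + 1)))) * Real.exp ((a * ‖LS‖) * ‖z‖) * κ) := by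
            refine mul_le_mul_of_nonneg_left ?_ (gauss2_pos d z).le
            exact mul_le_mul hfy hLEnorm (norm_nonneg _)
              (mul_nonneg (mul_nonneg hC₀ (Real.exp_pos _).le) (Real.exp_pos _).le)
        _ = K * (Real.exp ((a * ‖LS‖) * ‖z‖) * gauss2 d z) := by rw [hK]; ring
    · exact (integrable_exp_gauss d (a * ‖LS‖)).const_mul K
    · filter_upwards with z
      intro x hx
      have h1 : HasFDerivAt (fun x' : Phase d => LE x' + LS z) (LE : Phase d →L[ℝ] Phase d) x :=
        (LE.hasFDerivAt).add_const (LS z)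
      have h2 : HasFDerivAt (fun x' : Phase d => f (LE x' + LS z))
          ((fderiv ℝ f (LE x + LS z)).comp LE) x :=
        ((hdiff (LE x + LS z)).hasFDerivAt).comp x h1
      exact h2.mul_const (gauss2 d z)
  -- put everything together
  have hPt : kinSemigroup d t f = fun u' => ∫ z, f (LE u' + LS z) * gauss2 d z :=
    funext (hsemi f)
  have hfd_eq : fderiv ℝ (kinSemigroup d t f) u
      = ∫ z, gauss2 d z • ((fderiv ℝ f (LE u + LS z)).comp LE) := by
    rw [hPt]; exact key.fderiv
  rw [norm_gradient_eq, hfd_eq]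
  have hInt2 : Integrable (fun z => ‖gradient f (LE u + LS z)‖ * gauss2 d z) := by
    refine integrable_dom
      ((hgrad_cont.comp (continuous_const.add LS.continuous)).norm.aestronglyMeasurable)
      (C := C₀ * Real.exp (a * ‖LE u‖)) (b := a * ‖LS‖) ?_
    intro z
    have h3 := hcomp (fun w => ‖gradient f w‖) (fun y => by
      rw [abs_of_nonneg (norm_nonneg _)]; exact hgradabs y) z
    simpa using h3
  have h2 : ‖∫ z, gauss2 d z • ((fderiv ℝ f (LE u + LS z)).comp LE)‖
      ≤ ∫ z, κ * (‖gradient f (LE u + LS z)‖ * gauss2 d z) := by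
    refine norm_integral_le_of_norm_le (hInt2.const_mul κ) ?_
    filter_upwards with z
    rw [norm_smul (gauss2 d z) ((fderiv ℝ f (LE u + LS z)).comp LE), Real.norm_eq_abs,
      abs_of_pos (gauss2_pos d z)]
    calc gauss2 d z * ‖(fderiv ℝ f (LE u + LS z)).comp LE‖
        ≤ gauss2 d z * (‖fderiv ℝ f (LE u + LS z)‖ * κ) := by
          refine mul_le_mul_of_nonneg_left ?_ (gauss2_pos d z).le
          exact le_trans (ContinuousLinearMap.opNorm_comp_le _ _)
            (mul_le_mul_of_nonneg_left hLEnorm (norm_nonneg _))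
      _ = κ * (‖gradient f (LE u + LS z)‖ * gauss2 d z) := by
          rw [norm_gradient_eq]; ring
  calc ‖∫ z, gauss2 d z • ((fderiv ℝ f (LE u + LS z)).comp LE)‖
      ≤ ∫ z, κ * (‖gradient f (LE u + LS z)‖ * gauss2 d z) := h2
    _ = κ * ∫ z, ‖gradient f (LE u + LS z)‖ * gauss2 d z := integral_const_mul _ _
    _ = 4 * Real.exp (-t / 2) * kinSemigroup d t (fun w => ‖gradient f w‖) u := by
        rw [hsemi (fun w => ‖gradient f w‖) u, hκ]
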